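/- Let q₁,…,q_s be pairwise distinct monomials whose exponent vectors all lie in [2t,3t−1]ⁿ ∩ ℕⁿ and which all have the same total degree. Then the ideal I = J + ⟨q₁,…,q_s⟩ has minimal monomial generating set G(I) = G(J) ∪ {q₁,…,q_s}, so |G(I)| = 2n + s, and moreover I^i = J^i for every integer i ≥ 2. -/

import Mathlib

open MvPolynomial

/-- The monomial `μ = x₁ᵗ ⋯ xₙᵗ`. -/
noncomputable def mu (K : Type*) [Field K] (n t : ℕ) : MvPolynomial (Fin n) K :=
  ∏ i : Fin n, X i ^ t

/-- The skeleton ideal `J = ⟨x₁^{4t},…,xₙ^{4t}, x₁^{2t}μ,…,xₙ^{2t}μ⟩`. -/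
noncomputable def Jidl (K : Type*) [Field K] (n t : ℕ) : Ideal (MvPolynomial (Fin n) K) :=
  Ideal.span
    ((Set.range fun j : Fin n => (X j : MvPolynomial (Fin n) K) ^ (4 * t)) ∪
     (Set.range fun j : Fin n => (X j : MvPolynomial (Fin n) K) ^ (2 * t) * mu K n t))

/-- The monomial `q = μ² = x₁^{2t} ⋯ xₙ^{2t}`. -/
noncomputable def qmon (K : Type*) [Field K] (n t : ℕ) : MvPolynomial (Fin n) K :=
  ∏ i : Fin n, X i ^ (2 * t)

/-- The principal ideal `Q = ⟨q⟩`. -/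
noncomputable def Qidl (K : Type*) [Field K] (n t : ℕ) : Ideal (MvPolynomial (Fin n) K) :=
  Ideal.span {qmon K n t}

/-- A polynomial is a monomial if it is of the form `monomial s 1`. -/
def IsMonomial {K : Type*} [Field K] {σ : Type*} (p : MvPolynomial σ K) : Prop :=
  ∃ s : σ →₀ ℕ, p = monomial s 1

/-- The minimal monomial generating set of a monomial ideal: the monomials in `I`
that are not proper multiples of monomials lying in `I`. -/
def minGen {K : Type*} [Field K] {σ : Type*} (I : Ideal (MvPolynomial σ K)) :
    Set (MvPolynomial σ K) :=
  {p | IsMonomial p ∧ p ∈ I ∧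
    ∀ q : MvPolynomial σ K, IsMonomial q → q ∈ I → q ∣ p → q = p}


section AuxLemmas

variable {K : Type*} [Field K] {σ : Type*}

lemma mon_dvd_mon_iff {u v : σ →₀ ℕ} :
    (monomial u 1 : MvPolynomial σ K) ∣ monomial v 1 ↔ u ≤ v := by
  rw [monomial_dvd_monomial]
  simp

lemma mon_mem_span_iff {S : Set (σ →₀ ℕ)} {v : σ →₀ ℕ} :
    (monomial v 1 : MvPolynomial σ K) ∈
      Ideal.span ((fun s => (monomial s 1 : MvPolynomial σ K)) '' S) ↔ ∃ u ∈ S, u ≤ v := by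
  classical
  rw [mem_ideal_span_monomial_image]
  constructor
  · intro h
    exact h v (by simp)
  · rintro ⟨u, hu, huv⟩ xi hxi
    rw [mem_support_iff, coeff_monomial] at hxi
    by_cases hc : v = xi
    · exact ⟨u, hu, hc ▸ huv⟩
    · simp [hc] at hxi

lemma mon_mem_of_le {P : Ideal (MvPolynomial σ K)}
    {u v : σ →₀ ℕ} (h : (monomial u 1 : MvPolynomial σ K) ∈ P) (huv : u ≤ v) :
    (monomial v 1 : MvPolynomial σ K) ∈ P := by
  have heq : (monomial v 1 : MvPolynomial σ K) = monomial (v - u) 1 * monomial u 1 := by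
    rw [monomial_mul, one_mul, tsub_add_cancel_of_le huv]
  rw [heq]
  exact Ideal.mul_mem_left _ _ h

lemma minGen_span (S : Set (σ →₀ ℕ))
    (hmin : ∀ u ∈ S, ∀ v ∈ S, u ≤ v → u = v) :
    minGen (Ideal.span ((fun s => (monomial s 1 : MvPolynomial σ K)) '' S)) =
      (fun s => (monomial s 1 : MvPolynomial σ K)) '' S := by
  ext p
  constructor
  · rintro ⟨⟨v, rfl⟩, hmem, hminp⟩
    obtain ⟨u, huS, huv⟩ := mon_mem_span_iff.mp hmem
    have h1 : (monomial u 1 : MvPolynomial σ K) = monomial v 1 :=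
      hminp _ ⟨u, rfl⟩ (mon_mem_span_iff.mpr ⟨u, huS, le_refl u⟩) (mon_dvd_mon_iff.mpr huv)
    have h2 : u = v := monomial_left_injective one_ne_zero h1
    exact ⟨v, h2 ▸ huS, rfl⟩
  · rintro ⟨v, hvS, rfl⟩
    refine ⟨⟨v, rfl⟩, mon_mem_span_iff.mpr ⟨v, hvS, le_rfl⟩, ?_⟩
    rintro _ ⟨w, rfl⟩ hwI hdvd
    obtain ⟨u, huS, huw⟩ := mon_mem_span_iff.mp hwI
    have hwv := mon_dvd_mon_iff.mp hdvd
    have h1 : u = v := hmin u huS v hvS (le_trans huw hwv)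
    have h2 : w = v := le_antisymm hwv (h1 ▸ huw)
    rw [h2]

end AuxLemmas

/-- Adding `s` pairwise distinct monomials of the same total degree whose exponent
vectors lie in the box `[2t,3t−1]ⁿ` to the skeleton `J` produces an ideal `I` with
`G(I) = G(J) ∪ {q₁,…,q_s}`, hence `|G(I)| = 2n + s`, and `I^i = J^i` for all `i ≥ 2`. -/
theorem add_box_monomials_to_skeleton (K : Type*) [Field K] (n t : ℕ)
    (hn : 2 ≤ n) (ht : 1 ≤ t)
    (s : ℕ) (q : Fin s → (Fin n →₀ ℕ)) (hinj : Function.Injective q)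
    (hbox : ∀ a : Fin s, ∀ i : Fin n, 2 * t ≤ q a i ∧ q a i ≤ 3 * t - 1)
    (hdeg : ∀ a b : Fin s, ∑ i : Fin n, q a i = ∑ i : Fin n, q b i)
    (I : Ideal (MvPolynomial (Fin n) K))
    (hI : I = Jidl K n t ⊔
      Ideal.span (Set.range fun a : Fin s => (monomial (q a) 1 : MvPolynomial (Fin n) K))) :
    minGen I = minGen (Jidl K n t) ∪
        (Set.range fun a : Fin s => (monomial (q a) 1 : MvPolynomial (Fin n) K)) ∧
    (minGen I).ncard = 2 * n + s ∧
    (∀ i : ℕ, 2 ≤ i → I ^ i = (Jidl K n t) ^ i) := by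
  classical
  -- basic notation
  set R := MvPolynomial (Fin n) K
  let mon : (Fin n →₀ ℕ) → R := fun s => monomial s 1
  let Av : Fin n → (Fin n →₀ ℕ) := fun j => Finsupp.single j (4 * t)
  let Cv : Fin n →₀ ℕ := ∑ i : Fin n, Finsupp.single i t
  let Bv : Fin n → (Fin n →₀ ℕ) := fun j => Finsupp.single j (2 * t) + Cv
  haveI : Nontrivial (Fin n) := ⟨⟨⟨0, by omega⟩, ⟨1, by omega⟩, by simp [Fin.ext_iff]⟩⟩
  have hCv : ∀ i : Fin n, Cv i = t := by
    intro i
    simp only [Cv, Finsupp.finset_sum_apply, Finsupp.single_apply]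
    simp
  have hAvv : ∀ j, Av j j = 4 * t := fun j => Finsupp.single_eq_same
  have hAvo : ∀ j i, j ≠ i → Av j i = 0 := fun j i h => Finsupp.single_eq_of_ne' h
  have hBvv : ∀ j, Bv j j = 2 * t + t := by
    intro j; simp [Bv, Finsupp.add_apply, hCv]
  have hBvo : ∀ j i, j ≠ i → Bv j i = t := by
    intro j i h
    simp [Bv, Finsupp.add_apply, Finsupp.single_eq_of_ne' h, hCv]
  have hqlt : ∀ a i, q a i < 3 * t := fun a i =>
    lt_of_le_of_lt (hbox a i).2 (Nat.sub_lt (by omega) one_pos)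
  have hqge : ∀ a i, 2 * t ≤ q a i := fun a i => (hbox a i).1
  -- identification of the ideals as monomial ideals
  have hmu : mu K n t = monomial Cv 1 := by
    simp only [mu, X_pow_eq_monomial]
    exact (monomial_sum_one Finset.univ (fun i => Finsupp.single i t)).symm
  set Tvals : Set (Fin n →₀ ℕ) := Set.range Av ∪ Set.range Bv with hTvals
  set Svals : Set (Fin n →₀ ℕ) := Tvals ∪ Set.range q with hSvals
  have hgenA : (Set.range fun j : Fin n => (X j : R) ^ (4 * t)) = mon '' Set.range Av := by
    rw [← Set.range_comp]
    apply congrArg Set.range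
    funext j
    exact X_pow_eq_monomial
  have hgenB : (Set.range fun j : Fin n => (X j : R) ^ (2 * t) * mu K n t)
      = mon '' Set.range Bv := by
    rw [← Set.range_comp]
    apply congrArg Set.range
    funext j
    show (X j : R) ^ (2 * t) * mu K n t = monomial (Bv j) 1
    rw [X_pow_eq_monomial, hmu, monomial_mul, one_mul]
  have hJ : Jidl K n t = Ideal.span (mon '' Tvals) := by
    rw [Jidl, hTvals, Set.image_union, hgenA, hgenB]
  have hgenq : (Set.range fun a : Fin s => (monomial (q a) 1 : R)) = mon '' Set.range q := by
    rw [← Set.range_comp]; rfl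
  have hI' : I = Ideal.span (mon '' Svals) := by
    rw [hI, hJ, hgenq, ← Ideal.span_union, ← Set.image_union]
  -- pairwise incomparability
  have hsep : ∀ u ∈ Svals, ∀ v ∈ Svals, u ≤ v → u = v := by
    rintro u hu v hv huv
    have hle : ∀ i, u i ≤ v i := fun i => Finsupp.le_def.mp huv i
    rcases hu with (⟨j, rfl⟩ | ⟨j, rfl⟩) | ⟨a, rfl⟩ <;>
      rcases hv with (⟨k, rfl⟩ | ⟨k, rfl⟩) | ⟨b, rfl⟩
    · -- Av ≤ Av
      have hj := hle j
      rw [hAvv] at hj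
      by_cases hjk : k = j
      · rw [hjk]
      · rw [hAvo k j hjk] at hj; omega
    · -- Av ≤ Bv : impossible
      have hj := hle j
      rw [hAvv] at hj
      by_cases hjk : k = j
      · subst hjk; rw [hBvv] at hj; omega
      · rw [hBvo k j hjk] at hj; omega
    · -- Av ≤ q : impossible
      have hj := hle j
      rw [hAvv] at hj
      have := hqlt b j
      omega
    · -- Bv ≤ Av : impossible
      obtain ⟨i, hik⟩ := exists_ne k
      have hi := hle i
      rw [hAvo k i (Ne.symm hik)] at hi
      by_cases hji : j = i
      · subst hji; rw [hBvv] at hi; omega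
      · rw [hBvo j i hji] at hi; omega
    · -- Bv ≤ Bv
      have hj := hle j
      rw [hBvv] at hj
      by_cases hjk : k = j
      · rw [hjk]
      · rw [hBvo k j hjk] at hj; omega
    · -- Bv ≤ q : impossible
      have hj := hle j
      rw [hBvv] at hj
      have := hqlt b j
      omega
    · -- q ≤ Av : impossible
      obtain ⟨i, hik⟩ := exists_ne k
      have hi := hle i
      rw [hAvo k i (Ne.symm hik)] at hi
      have := hqge a i
      omega
    · -- q ≤ Bv : impossible
      obtain ⟨i, hik⟩ := exists_ne k
      have hi := hle i
      rw [hBvo k i (Ne.symm hik)] at hi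
      have := hqge a i
      omega
    · -- q ≤ q
      have hsum : ∑ i : Fin n, q a i = ∑ i : Fin n, q b i := hdeg a b
      have : ∀ i ∈ Finset.univ, q a i = q b i :=
        (Finset.sum_eq_sum_iff_of_le (fun i _ => hle i)).mp hsum
      exact Finsupp.ext fun i => this i (Finset.mem_univ i)
  have hsepT : ∀ u ∈ Tvals, ∀ v ∈ Tvals, u ≤ v → u = v := fun u hu v hv =>
    hsep u (Set.mem_union_left _ hu) v (Set.mem_union_left _ hv)
  -- minimal generating sets
  have hminI : minGen I = mon '' Svals := by
    rw [hI']; exact minGen_span Svals hsep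
  have hminJ : minGen (Jidl K n t) = mon '' Tvals := by
    rw [hJ]; exact minGen_span Tvals hsepT
  -- injectivity facts
  have hAinj : Function.Injective Av := Finsupp.single_left_injective (by omega)
  have hBinj : Function.Injective Bv := by
    intro j k h
    by_contra hne
    have := congrArg (fun f : Fin n →₀ ℕ => f j) h
    rw [hBvv, hBvo k j (Ne.symm hne)] at this
    omega
  have hmoninj : Function.Injective mon := monomial_left_injective one_ne_zero
  -- disjointness facts
  have hdisjAB : Disjoint (Set.range Av) (Set.range Bv) := by
    rw [Set.disjoint_left]
    rintro x ⟨j, rfl⟩ ⟨k, hk⟩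
    obtain ⟨i, hij⟩ := exists_ne j
    have := congrArg (fun f : Fin n →₀ ℕ => f i) hk
    rw [hAvo j i (Ne.symm hij)] at this
    by_cases hki : k = i
    · subst hki; rw [hBvv] at this; omega
    · rw [hBvo k i hki] at this; omega
  have hdisjTq : Disjoint Tvals (Set.range q) := by
    rw [Set.disjoint_left]
    rintro x (⟨j, rfl⟩ | ⟨j, rfl⟩) ⟨a, ha⟩
    · have := congrArg (fun f : Fin n →₀ ℕ => f j) ha
      rw [hAvv] at this
      have := hqlt a j
      omega
    · have := congrArg (fun f : Fin n →₀ ℕ => f j) ha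
      rw [hBvv] at this
      have := hqlt a j
      omega
  -- cardinalities
  have hcard : (minGen I).ncard = 2 * n + s := by
    rw [hminI, Set.ncard_image_of_injective _ hmoninj, hSvals, hTvals]
    rw [Set.ncard_union_eq (hTvals ▸ hdisjTq)
      ((Set.finite_range Av).union (Set.finite_range Bv)) (Set.finite_range q)]
    rw [Set.ncard_union_eq hdisjAB (Set.finite_range Av) (Set.finite_range Bv)]
    have h1 : (Set.range Av).ncard = n := by
      rw [← Nat.card_coe_set_eq, Nat.card_range_of_injective hAinj,
        Nat.card_eq_fintype_card, Fintype.card_fin]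
    have h2 : (Set.range Bv).ncard = n := by
      rw [← Nat.card_coe_set_eq, Nat.card_range_of_injective hBinj,
        Nat.card_eq_fintype_card, Fintype.card_fin]
    have h3 : (Set.range q).ncard = s := by
      rw [← Nat.card_coe_set_eq, Nat.card_range_of_injective hinj,
        Nat.card_eq_fintype_card, Fintype.card_fin]
    rw [h1, h2, h3]; ring
  -- power statement
  have hmemJ : ∀ w ∈ Tvals, (monomial w 1 : R) ∈ Jidl K n t := by
    intro w hw
    rw [hJ]
    exact mon_mem_span_iff.mpr ⟨w, hw, le_rfl⟩
  have hJ2mem : ∀ w1 ∈ Tvals, ∀ w2 ∈ Tvals, ∀ v : Fin n →₀ ℕ, w1 + w2 ≤ v →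
      (monomial v 1 : R) ∈ (Jidl K n t) ^ 2 := by
    intro w1 h1 w2 h2 v hv
    have hm : (monomial (w1 + w2) 1 : R) ∈ (Jidl K n t) ^ 2 := by
      rw [sq]
      have := Ideal.mul_mem_mul (hmemJ w1 h1) (hmemJ w2 h2)
      rwa [monomial_mul, one_mul] at this
    exact mon_mem_of_le hm hv
  obtain ⟨i0, i1, hi01⟩ := exists_pair_ne (Fin n)
  set Q' : Ideal R :=
    Ideal.span (Set.range fun a : Fin s => (monomial (q a) 1 : R)) with hQ'
  have hQ'span : Q' = Ideal.span (mon '' Set.range q) := by rw [hQ', hgenq]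
  have key : ∀ a : Fin s, ∀ v ∈ Tvals ∪ Set.range q,
      (monomial (q a + v) 1 : R) ∈ (Jidl K n t) ^ 2 := by
    rintro a v ((⟨j, rfl⟩ | ⟨j, rfl⟩) | ⟨b, rfl⟩)
    · -- q a + Av j ≥ Bv j + Bv j
      refine hJ2mem (Bv j) (Set.mem_union_right _ ⟨j, rfl⟩)
        (Bv j) (Set.mem_union_right _ ⟨j, rfl⟩) _ (Finsupp.le_def.mpr fun i => ?_)
      simp only [Finsupp.add_apply]
      by_cases hji : j = i
      · subst hji; rw [hBvv, hAvv]; have := hqge a j; omega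
      · rw [hBvo j i hji, hAvo j i hji]; have := hqge a i; omega
    · -- q a + Bv j ≥ Av j + Bv k, k ≠ j
      obtain ⟨k, hkj⟩ := exists_ne j
      refine hJ2mem (Av j) (Set.mem_union_left _ ⟨j, rfl⟩)
        (Bv k) (Set.mem_union_right _ ⟨k, rfl⟩) _ (Finsupp.le_def.mpr fun i => ?_)
      simp only [Finsupp.add_apply]
      have hq2 := hqge a i
      by_cases hji : j = i
      · subst hji
        rw [hAvv, hBvv, hBvo k j hkj]
        omega
      · rw [hAvo j i hji]
        by_cases hki : k = i
        · rw [← hki, hBvv, hBvo j k fun h => hji (h.trans hki)]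
          have := hqge a k
          omega
        · rw [hBvo k i hki, hBvo j i hji]; omega
    · -- q a + q b ≥ Bv i0 + Bv i1
      refine hJ2mem (Bv i0) (Set.mem_union_right _ ⟨i0, rfl⟩)
        (Bv i1) (Set.mem_union_right _ ⟨i1, rfl⟩) _ (Finsupp.le_def.mpr fun i => ?_)
      simp only [Finsupp.add_apply]
      have h1 := hqge a i
      have h2 := hqge b i
      by_cases h0 : i0 = i
      · subst h0
        rw [hBvv, hBvo i1 i0 (Ne.symm hi01)]
        omega
      · rw [hBvo i0 i h0]
        by_cases h1' : i1 = i
        · subst h1'; rw [hBvv]; omega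
        · rw [hBvo i1 i h1']; omega
  have hQJ : Q' * Jidl K n t ≤ (Jidl K n t) ^ 2 := by
    rw [hQ'span, hJ, Ideal.span_mul_span']
    rw [Ideal.span_le]
    rintro x ⟨y, ⟨u, ⟨a, rfl⟩, rfl⟩, z, ⟨v, hv, rfl⟩, rfl⟩
    have hx : (fun x1 x2 : R => x1 * x2) (mon (q a)) (mon v) = monomial (q a + v) 1 := by
      show (monomial (q a) 1 : R) * monomial v 1 = _
      rw [monomial_mul, one_mul]
    rw [hx, ← hJ]
    exact key a v (Set.mem_union_left _ hv)
  have hQQ : Q' * Q' ≤ (Jidl K n t) ^ 2 := by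
    rw [hQ'span, Ideal.span_mul_span']
    rw [Ideal.span_le]
    rintro x ⟨y, ⟨u, ⟨a, rfl⟩, rfl⟩, z, ⟨v, ⟨b, rfl⟩, rfl⟩, rfl⟩
    have hx : (fun x1 x2 : R => x1 * x2) (mon (q a)) (mon (q b)) = monomial (q a + q b) 1 := by
      show (monomial (q a) 1 : R) * monomial (q b) 1 = _
      rw [monomial_mul, one_mul]
    rw [hx]
    exact key a (q b) (Set.mem_union_right _ ⟨b, rfl⟩)
  have hJleI : Jidl K n t ≤ I := hI ▸ le_sup_left
  have hsub : Jidl K n t * (Jidl K n t ⊔ Q') ≤ (Jidl K n t) ^ 2 := by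
    rw [Ideal.mul_sup]
    refine sup_le (le_of_eq (sq (Jidl K n t)).symm) ?_
    rw [mul_comm]
    exact hQJ
  have hJI : Jidl K n t * I ≤ (Jidl K n t) ^ 2 := by
    rw [hI]
    exact hsub
  have hI2 : I ^ 2 = (Jidl K n t) ^ 2 := by
    refine le_antisymm ?_ (Ideal.pow_right_mono hJleI 2)
    calc I ^ 2 = I * I := sq I
      _ = (Jidl K n t ⊔ Q') * I := by rw [← hI]
      _ = Jidl K n t * I ⊔ Q' * I := Ideal.sup_mul _ _ _
      _ ≤ (Jidl K n t) ^ 2 := by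
          refine sup_le hJI ?_
          rw [hI, Ideal.mul_sup]
          exact sup_le hQJ hQQ
  have hpow : ∀ i : ℕ, 2 ≤ i → I ^ i = (Jidl K n t) ^ i := by
    intro i hi
    induction i, hi using Nat.le_induction with
    | base => exact hI2
    | succ i hi ih =>
      obtain ⟨k, rfl⟩ : ∃ k, i = k + 2 := ⟨i - 2, by omega⟩
      refine le_antisymm ?_ ?_
      · calc I ^ (k + 2 + 1) = I ^ (k + 2) * I := pow_succ I (k + 2)
          _ = (Jidl K n t) ^ (k + 2) * I := by rw [ih]
          _ = (Jidl K n t) ^ (k + 1) * ((Jidl K n t) * I) := by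
              rw [← mul_assoc, ← pow_succ]
          _ ≤ (Jidl K n t) ^ (k + 1) * (Jidl K n t) ^ 2 :=
              Ideal.mul_mono_right hJI
          _ = (Jidl K n t) ^ (k + 2 + 1) := by rw [← pow_add]
      · exact Ideal.pow_right_mono hJleI (k + 2 + 1)
  refine ⟨?_, hcard, hpow⟩
  rw [hminI, hminJ, hSvals, Set.image_union, hgenq]
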